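/- Suppose char(k) = 0. Then the k-hull k((F)) is a subring (possibly without identity) of k((G)) if and only if F satisfies (S2) closure under subsets, (S3) closure under finite unions, (S5) nonemptiness, and (A2) closure under sumsets A ⊕ B. -/

import Mathlib

open scoped Pointwise

/-- Indicator Hahn series. -/
noncomputable def ind {G : Type*} [AddCommGroup G] [LinearOrder G] [IsOrderedAddMonoid G] {k : Type*} [Field k]
    (A : Set G) (hA : A.IsWF) (c : k) : HahnSeries G k :=
  ⟨A.indicator (fun _ => c), by
    apply Set.IsPWO.mono hA.isPWO
    intro g hg
    simp only [Function.mem_support] at hg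
    by_contra h
    exact hg (Set.indicator_of_notMem h _)⟩

theorem ind_coeff {G : Type*} [AddCommGroup G] [LinearOrder G] [IsOrderedAddMonoid G] {k : Type*} [Field k]
    (A : Set G) (hA : A.IsWF) (c : k) : (ind A hA c).coeff = A.indicator (fun _ => c) := rfl

theorem ind_support {G : Type*} [AddCommGroup G] [LinearOrder G] [IsOrderedAddMonoid G] {k : Type*} [Field k]
    (A : Set G) (hA : A.IsWF) (c : k) (hc : c ≠ 0) : (ind A hA c).support = A := by
  ext g
  simp [HahnSeries.mem_support, ind_coeff, Set.indicator_apply]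
  tauto

/-- Suppose `char k = 0`. Then the `k`-hull `k((F))` is a subring (possibly
without identity) of `k((G))` if and only if `F` satisfies (S2) closure under subsets,
(S3) closure under finite unions, (S5) nonemptiness, and (A2) closure under sumsets. -/
theorem khull_nonUnitalSubring_iff_charZero
    {G : Type*} [AddCommGroup G] [LinearOrder G] [IsOrderedAddMonoid G] {k : Type*} [Field k] [CharZero k]
    (F : Set (Set G)) (hWF : ∀ A ∈ F, A.IsWF) :
    (∃ S : NonUnitalSubring (HahnSeries G k),
        (S : Set (HahnSeries G k)) = {a : HahnSeries G k | a.support ∈ F}) ↔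
      ((∀ A ∈ F, ∀ B ⊆ A, B ∈ F) ∧ (∀ A ∈ F, ∀ B ∈ F, A ∪ B ∈ F) ∧ F.Nonempty ∧
        (∀ A ∈ F, ∀ B ∈ F, A + B ∈ F)) := by
  constructor
  · rintro ⟨S, hS⟩
    have hmem : ∀ a : HahnSeries G k, a ∈ S ↔ a.support ∈ F := by
      intro a
      rw [← SetLike.mem_coe, hS]; rfl
    have hemp : (∅ : Set G) ∈ F := by
      have := (hmem 0).mp S.zero_mem
      simpa using this
    refine ⟨?_, ?_, ⟨∅, hemp⟩, ?_⟩
    · -- subsets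
      intro A hA B hB
      have hAW := hWF A hA
      have hBW : B.IsWF := hAW.mono hB
      have ha : ind A hAW (1 : k) ∈ S := by
        rw [hmem, ind_support _ _ _ one_ne_zero]; exact hA
      have hc : ind A hAW (1 : k) + ind B hBW (1 : k) ∈ S := by
        rw [hmem]
        have : (ind A hAW (1 : k) + ind B hBW (1 : k)).support = A := by
          ext g
          simp only [HahnSeries.mem_support, HahnSeries.coeff_add, ind_coeff,
            Set.indicator_apply]
          by_cases hgA : g ∈ A <;> by_cases hgB : g ∈ B <;>
            first
            | exact absurd (hB hgB) hgA
            | (simp [hgA, hgB]; try norm_num)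
        rw [this]; exact hA
      have hb : ind B hBW (1 : k) ∈ S := by
        have := S.sub_mem hc ha
        simpa using this
      have := (hmem _).mp hb
      rwa [ind_support _ _ _ one_ne_zero] at this
    · -- unions
      intro A hA B hB
      have hAW := hWF A hA
      have hBW := hWF B hB
      have ha : ind A hAW (1 : k) ∈ S := by
        rw [hmem, ind_support _ _ _ one_ne_zero]; exact hA
      have hb : ind B hBW (2 : k) ∈ S := by
        rw [hmem, ind_support _ _ _ two_ne_zero]; exact hB
      have hsum := (hmem _).mp (S.add_mem ha hb)
      have : (ind A hAW (1 : k) + ind B hBW (2 : k)).support = A ∪ B := by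
        ext g
        simp only [HahnSeries.mem_support, HahnSeries.coeff_add, ind_coeff,
          Set.indicator_apply, Set.mem_union]
        by_cases hgA : g ∈ A <;> by_cases hgB : g ∈ B <;> (simp [hgA, hgB]; try norm_num)
      rwa [this] at hsum
    · -- sumsets
      intro A hA B hB
      have hAW := hWF A hA
      have hBW := hWF B hB
      set a := ind A hAW (1 : k)
      set b := ind B hBW (1 : k)
      have ha : a ∈ S := by rw [hmem, ind_support _ _ _ one_ne_zero]; exact hA
      have hb : b ∈ S := by rw [hmem, ind_support _ _ _ one_ne_zero]; exact hB
      have hprod := (hmem _).mp (S.mul_mem ha hb)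
      have hsa : a.support = A := ind_support _ _ _ one_ne_zero
      have hsb : b.support = B := ind_support _ _ _ one_ne_zero
      have hsup : (a * b).support = A + B := by
        ext g
        simp only [HahnSeries.mem_support]
        rw [HahnSeries.coeff_mul]
        have hcoef : ∀ ij ∈ Finset.antidiagonal a.isPWO_support b.isPWO_support g,
            a.coeff ij.1 * b.coeff ij.2 = 1 := by
          intro ij hij
          rw [Finset.mem_addAntidiagonal] at hij
          have h1 : a.coeff ij.1 = 1 := by
            have := hij.1; rw [hsa] at this
            simp [a, ind_coeff, Set.indicator_of_mem this]
          have h2 : b.coeff ij.2 = 1 := by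
            have := hij.2.1; rw [hsb] at this
            simp [b, ind_coeff, Set.indicator_of_mem this]
          rw [h1, h2, mul_one]
        rw [Finset.sum_congr rfl hcoef, Finset.sum_const, nsmul_eq_mul, mul_one]
        rw [Ne, Nat.cast_eq_zero, Finset.card_eq_zero, ← Ne, ← Finset.nonempty_iff_ne_empty]
        constructor
        · rintro ⟨ij, hij⟩
          rw [Finset.mem_addAntidiagonal, hsa, hsb] at hij
          rw [← hij.2.2]
          exact Set.add_mem_add hij.1 hij.2.1
        · intro hg
          obtain ⟨x, hx, y, hy, hxy⟩ := Set.mem_add.mp hg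
          exact ⟨⟨x, y⟩, Finset.mem_addAntidiagonal.mpr ⟨hsa ▸ hx, hsb ▸ hy, hxy⟩⟩
      rwa [hsup] at hprod
  · rintro ⟨hsub, hun, ⟨A₀, hA₀⟩, hadd⟩
    have hemp : (∅ : Set G) ∈ F := hsub A₀ hA₀ ∅ (Set.empty_subset _)
    refine ⟨{ carrier := {a : HahnSeries G k | a.support ∈ F},
              add_mem' := ?_, zero_mem' := ?_, mul_mem' := ?_, neg_mem' := ?_ }, rfl⟩
    · intro a b ha hb
      exact hsub _ (hun _ ha _ hb) _ (HahnSeries.support_add_subset _ _)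
    · simpa using hemp
    · intro a b ha hb
      exact hsub _ (hadd _ ha _ hb) _ HahnSeries.support_mul_subset
    · intro a ha
      simpa using ha
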